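/- Let γ = 1 + φ with φ ∼ N(0, σ²). Define the min-sum recursion X_l, Y_l on a (d_L,d_R)-regular tree with weight vector ω^{(ρ)} equal to some fixed ω̄ ∈ ℝ_+^s on the first s levels and constant ρ on levels s,…,T−1. Suppose min_{t ≥ 0} E[e^{−tX_s}] < ((d_R−1)·e^{−1/(2σ²)})^{−1/(d_L−2)}. Then there exist constants c < 1 and ρ ≥ 0 such that for every T > s, P(Σ_{i=1}^{d_L} X_{T−1}^{(i)} ≤ 0) ≤ ((d_R−1)·e^{−1/(2σ²)})^{−d_L/(d_L−2)} · c^{d_L·(d_L−1)^{T−s−1}}. -/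

import Mathlib

open MeasureTheory ProbabilityTheory Real Filter
open scoped NNReal ENNReal

lemma aux_gaussian_pdf_mul (m : ℝ) {v : ℝ≥0} (hv : v ≠ 0) (u : ℝ) (x : ℝ) :
    gaussianPDFReal m v x * exp (u * x) =
      exp (u * m + (v : ℝ) * u ^ 2 / 2) * gaussianPDFReal (m + u * v) v x := by
  have hv' : (0:ℝ) < (v:ℝ) := by
    have := v.coe_nonneg
    rcases this.lt_or_eq with h | h
    · exact h
    · exact absurd (by exact_mod_cast h.symm) hv
  have key : exp (- (x - m)^2 / (2 * v)) * exp (u * x) =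
      exp (u * m + (v : ℝ) * u ^ 2 / 2) * exp (- (x - (m + u * v))^2 / (2 * v)) := by
    rw [← exp_add, ← exp_add]
    congr 1
    field_simp [hv'.ne']
    ring
  simp only [gaussianPDFReal]
  linear_combination (√(2 * π * (v:ℝ)))⁻¹ * key

lemma aux_gaussian_exp (m : ℝ) {v : ℝ≥0} (hv : v ≠ 0) (u : ℝ) :
    Integrable (fun x => exp (u * x)) (gaussianReal m v) ∧
    ∫ x, exp (u * x) ∂(gaussianReal m v) = exp (u * m + (v : ℝ) * u ^ 2 / 2) := by
  rw [gaussianReal_of_var_ne_zero m hv]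
  have hd : gaussianPDF m v = fun x => ((Real.toNNReal (gaussianPDFReal m v x) : ℝ≥0) : ℝ≥0∞) := by
    funext x; rfl
  have fmeas : Measurable fun x => Real.toNNReal (gaussianPDFReal m v x) :=
    (measurable_gaussianPDFReal m v).real_toNNReal
  have hsmul : (fun x => (Real.toNNReal (gaussianPDFReal m v x)) • exp (u * x)) =
      fun x => exp (u * m + (v : ℝ) * u ^ 2 / 2) * gaussianPDFReal (m + u * v) v x := by
    funext x
    rw [NNReal.smul_def, Real.coe_toNNReal _ (gaussianPDFReal_nonneg m v x), smul_eq_mul,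
      aux_gaussian_pdf_mul m hv u x]
  rw [hd]
  constructor
  · rw [integrable_withDensity_iff_integrable_smul fmeas, hsmul]
    exact (integrable_gaussianPDFReal _ _).const_mul _
  · rw [integral_withDensity_eq_integral_smul fmeas, hsmul, integral_const_mul,
      integral_gaussianPDFReal_eq_one _ hv, mul_one]

lemma aux_iIndepFun_congr {Ω ι : Type*} [MeasurableSpace Ω] {μ : Measure Ω}
    {f g : ι → Ω → ℝ} (hf : iIndepFun f μ)
    (h : ∀ i, f i =ᵐ[μ] g i) :
    iIndepFun g μ := by
  rw [iIndepFun_iff_measure_inter_preimage_eq_mul] at hf ⊢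
  intro S sets hsets
  have hall : ∀ᵐ ω ∂μ, ∀ i ∈ S, f i ω = g i ω :=
    (eventually_all_finset S).2 fun i _ => h i
  have hAB : ((⋂ i ∈ S, g i ⁻¹' sets i) : Set Ω) =ᵐ[μ] (⋂ i ∈ S, f i ⁻¹' sets i) := by
    filter_upwards [hall] with ω hω
    show (ω ∈ ⋂ i ∈ S, g i ⁻¹' sets i) = (ω ∈ ⋂ i ∈ S, f i ⁻¹' sets i)
    simp only [Set.mem_iInter, Set.mem_preimage, eq_iff_iff]
    constructor
    · intro H i hi; rw [hω i hi]; exact H i hi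
    · intro H i hi; rw [← hω i hi]; exact H i hi
  calc μ (⋂ i ∈ S, g i ⁻¹' sets i) = μ (⋂ i ∈ S, f i ⁻¹' sets i) := measure_congr hAB
    _ = ∏ i ∈ S, μ (f i ⁻¹' sets i) := hf S hsets
    _ = ∏ i ∈ S, μ (g i ⁻¹' sets i) := by
        refine Finset.prod_congr rfl fun i hi => measure_congr ?_
        filter_upwards [h i] with ω hω
        show (f i ω ∈ sets i) = (g i ω ∈ sets i)
        rw [hω]

lemma aux_exp_id {Ω : Type*} [MeasurableSpace Ω] {μ : Measure Ω} {f h : Ω → ℝ}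
    (hfh : IdentDistrib f h μ μ) (t : ℝ) :
    IdentDistrib (fun o => exp (t * f o)) (fun o => exp (t * h o)) μ μ :=
  hfh.comp ((measurable_id.const_mul t).exp)

/-- Auxiliary recursive upper bound sequence for the Laplace transform at `t = 1`. -/
noncomputable def auxF (dR : ℕ) (σ : ℝ) (dL : ℕ) (ω : ℕ → ℝ) : ℕ → ℝ
  | 0 => ((dR:ℝ) - 1) * Real.exp (-((1:ℝ) * ω 0) + σ ^ 2 * ((1:ℝ) * ω 0) ^ 2 / 2)
  | (n+1) => ((dR:ℝ) - 1) * Real.exp (-((1:ℝ) * ω (n+1)) + σ ^ 2 * ((1:ℝ) * ω (n+1)) ^ 2 / 2) *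
      (auxF dR σ dL ω n) ^ (dL - 1)

/-- The min-sum recursion on a `(d_L, d_R)`-regular tree: `Y_0 = ω_0·γ`; for `0 ≤ l < T`,
`X_l` is the minimum of `d_R − 1` mutually independent copies of `Y_l`; and for `0 < l < T`,
`Y_l = ω_l·γ' + X_{l−1}^{(1)} + … + X_{l−1}^{(d_L−1)}` with a fresh copy `γ'` of `γ` and
mutually independent copies of `X_{l−1}`, all mutually independent. -/
structure MinSumRecursion {Ω : Type*} [MeasurableSpace Ω] (μ : MeasureTheory.Measure Ω)
    (γ : Ω → ℝ) (ω : ℕ → ℝ) (dL dR T : ℕ) (X Y : ℕ → Ω → ℝ) : Prop where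
  hY0 : IdentDistrib (Y 0) (fun o => ω 0 * γ o) μ μ
  hX : ∀ l < T, ∃ Z : Fin (dR - 1) → Ω → ℝ,
      iIndepFun Z μ ∧
      (∀ i, IdentDistrib (Z i) (Y l) μ μ) ∧
      ∀ o, X l o = sInf (Set.range fun i => Z i o)
  hY : ∀ l, 0 < l → l < T → ∃ (g : Ω → ℝ) (Z : Fin (dL - 1) → Ω → ℝ),
      IdentDistrib g γ μ μ ∧
      (∀ i, IdentDistrib (Z i) (X (l - 1)) μ μ) ∧
      iIndepFun
        (fun o : Option (Fin (dL - 1)) => Option.elim o g Z) μ ∧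
      ∀ o, Y l o = ω l * g o + ∑ i, Z i o

set_option maxHeartbeats 16000000 in
/-- Improved non-uniform-weight bound (AWGN channel): let `γ = 1 + φ`, `φ ∼ N(0,σ²)`, and for
each `ρ ≥ 0` let `X ρ, Y ρ` follow the min-sum recursion on a `(d_L,d_R)`-regular tree with
weights `ω̄` on the first levels and `ρ` thereafter. If
`min_{t≥0} E[e^{−tX_s}] < ((d_R−1)e^{−1/(2σ²)})^{−1/(d_L−2)}`, then there exist `c < 1` and
`ρ ≥ 0` such that for every `T > s`,
`P(Σ_{i=1}^{d_L} X_{T−1}^{(i)} ≤ 0) ≤ ((d_R−1)e^{−1/(2σ²)})^{−d_L/(d_L−2)} · c^{d_L(d_L−1)^{T−s−1}}`. -/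
theorem improved_nonuniform_weight_bound
    {Ω : Type*} [MeasurableSpace Ω] (μ : MeasureTheory.Measure Ω) [IsProbabilityMeasure μ]
    (σ : ℝ) (hσ : 0 < σ) (dL dR : ℕ) (hdL : 2 < dL) (hdR : 2 < dR)
    (γ : Ω → ℝ) (hmeasγ : Measurable γ)
    (hγ : μ.map γ = gaussianReal 1 (σ ^ 2).toNNReal)
    (s : ℕ) (ωbar : ℕ → ℝ) (hωbar : ∀ l, 0 ≤ ωbar l)
    (X Y : ℝ → ℕ → Ω → ℝ)
    (hrec : ∀ ρ : ℝ, 0 ≤ ρ → ∀ T : ℕ,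
      MinSumRecursion μ γ (fun l => if l ≤ s then ωbar l else ρ) dL dR T (X ρ) (Y ρ))
    (hmeasX : ∀ ρ l, Measurable (X ρ l)) (hmeasY : ∀ ρ l, Measurable (Y ρ l))
    (hintX : ∀ (ρ : ℝ) (l : ℕ) (t : ℝ), 0 ≤ t → Integrable (fun o => exp (-t * X ρ l o)) μ)
    (hXs : ∃ t : ℝ, 0 ≤ t ∧ ∀ ρ : ℝ, 0 ≤ ρ →
      ∫ o, exp (-t * X ρ s o) ∂μ <
        (((dR : ℝ) - 1) * exp (-1 / (2 * σ ^ 2))) ^ (-(1 : ℝ) / ((dL : ℝ) - 2))) :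
    ∃ c : ℝ, c < 1 ∧ ∃ ρ : ℝ, 0 ≤ ρ ∧ ∀ T : ℕ, s < T →
      ∀ S : Fin dL → Ω → ℝ,
        iIndepFun S μ →
        (∀ i, IdentDistrib (S i) (X ρ (T - 1)) μ μ) →
        (μ {o | ∑ i, S i o ≤ 0}).toReal ≤
          (((dR : ℝ) - 1) * exp (-1 / (2 * σ ^ 2))) ^ (-(dL : ℝ) / ((dL : ℝ) - 2)) *
            c ^ (dL * (dL - 1) ^ (T - s - 1)) := by
  classical
  have hσ2 : (0:ℝ) < σ ^ 2 := by positivity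
  have hvne : (σ ^ 2).toNNReal ≠ 0 := by
    simp only [ne_eq, Real.toNNReal_eq_zero, not_le]
    exact hσ2
  have hvcoe : (((σ ^ 2).toNNReal : ℝ≥0) : ℝ) = σ ^ 2 := Real.coe_toNNReal _ (sq_nonneg σ)
  have hdRR : (2:ℝ) < (dR:ℝ) := by exact_mod_cast hdR
  have hdLR : (2:ℝ) < (dL:ℝ) := by exact_mod_cast hdL
  -- Gaussian mgf through γ
  have hmgfγ : ∀ u : ℝ, Integrable (fun o => exp (u * γ o)) μ ∧
      ∫ o, exp (u * γ o) ∂μ = exp (u + σ ^ 2 * u ^ 2 / 2) := by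
    intro u
    have hg := aux_gaussian_exp 1 hvne u
    have hcont : Measurable fun x : ℝ => exp (u * x) := (measurable_id.const_mul u).exp
    constructor
    · have h1 : Integrable (fun x => exp (u * x)) (μ.map γ) := by rw [hγ]; exact hg.1
      exact (integrable_map_measure hcont.aestronglyMeasurable hmeasγ.aemeasurable).1 h1
    · rw [← integral_map hmeasγ.aemeasurable hcont.aestronglyMeasurable, hγ, hg.2, mul_one, hvcoe]
  have Lnonneg : ∀ ρ t l, 0 ≤ ∫ o, exp (-t * X ρ l o) ∂μ := fun ρ t l =>
    integral_nonneg fun o => (exp_nonneg _)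
  -- level 0
  have hY0law : ∀ ρ : ℝ, 0 ≤ ρ → ∀ t : ℝ,
      Integrable (fun o => exp (-t * Y ρ 0 o)) μ ∧
      ∫ o, exp (-t * Y ρ 0 o) ∂μ =
        exp (-(t * ωbar 0) + σ ^ 2 * (t * ωbar 0) ^ 2 / 2) := by
    intro ρ hρ t
    have h0 := (hrec ρ hρ 1).hY0
    rw [if_pos (Nat.zero_le s)] at h0
    have hId := aux_exp_id h0 (-t)
    have heq : (fun o => exp (-t * (ωbar 0 * γ o))) = fun o => exp (-(t * ωbar 0) * γ o) := by
      funext o; congr 1; ring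
    rw [heq] at hId
    have hm := hmgfγ (-(t * ωbar 0))
    constructor
    · exact hId.integrable_iff.2 hm.1
    · rw [hId.integral_eq, hm.2, neg_sq]
  -- level l ≥ 1 for Y
  have hYstep : ∀ ρ : ℝ, 0 ≤ ρ → ∀ t : ℝ, 0 ≤ t → ∀ l : ℕ, 0 < l →
      Integrable (fun o => exp (-t * Y ρ l o)) μ ∧
      ∫ o, exp (-t * Y ρ l o) ∂μ =
        exp (-(t * (if l ≤ s then ωbar l else ρ)) +
            σ ^ 2 * (t * (if l ≤ s then ωbar l else ρ)) ^ 2 / 2) *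
          (∫ o, exp (-t * X ρ (l - 1) o) ∂μ) ^ (dL - 1) := by
    intro ρ hρ t ht l hl
    obtain ⟨g, Z, hgid, hZid, hind, hYeq⟩ := (hrec ρ hρ (l+1)).hY l hl (Nat.lt_succ_self l)
    set wl := (if l ≤ s then ωbar l else ρ) with hwl
    have hgae : AEMeasurable g μ := hgid.aemeasurable_fst
    have hZae : ∀ i, AEMeasurable (Z i) μ := fun i => (hZid i).aemeasurable_fst
    set g' := hgae.mk g with hg'def
    set Z' : Fin (dL-1) → Ω → ℝ := fun i => (hZae i).mk (Z i) with hZ'def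
    have hg'meas : Measurable g' := hgae.measurable_mk
    have hZ'meas : ∀ i, Measurable (Z' i) := fun i => (hZae i).measurable_mk
    have hgg' : g =ᵐ[μ] g' := hgae.ae_eq_mk
    have hZZ' : ∀ i, Z i =ᵐ[μ] Z' i := fun i => (hZae i).ae_eq_mk
    have hg'id : IdentDistrib g' γ μ μ :=
      ⟨hg'meas.aemeasurable, hgid.aemeasurable_snd,
        by rw [← Measure.map_congr hgg', hgid.map_eq]⟩
    have hZ'id : ∀ i, IdentDistrib (Z' i) (X ρ (l-1)) μ μ := fun i =>
      ⟨(hZ'meas i).aemeasurable, (hZid i).aemeasurable_snd,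
        by rw [← Measure.map_congr (hZZ' i), (hZid i).map_eq]⟩
    have hind' : iIndepFun
        (fun j : Option (Fin (dL-1)) => Option.elim j g' Z') μ :=
      aux_iIndepFun_congr hind (by rintro (_|i); exacts [hgg', hZZ' i])
    set V : Option (Fin (dL-1)) → Ω → ℝ := fun j => Option.elim j (fun o => wl * g' o) Z'
      with hVdef
    have hVmeas : ∀ j, Measurable (V j) := by
      rintro (_|i)
      · exact hg'meas.const_mul wl
      · exact hZ'meas i
    have hindV : iIndepFun V μ := by
      have hc := hind'.comp
        (fun j : Option (Fin (dL-1)) => Option.elim j (fun x : ℝ => wl * x) fun _ => id)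
        (by rintro (_|i); exacts [measurable_id.const_mul wl, measurable_id])
      have he : (fun j : Option (Fin (dL-1)) =>
          (Option.elim j (fun x : ℝ => wl * x) fun _ => id) ∘ (Option.elim j g' Z')) = V := by
        funext j; cases j <;> rfl
      rwa [he] at hc
    have hintV : ∀ j, Integrable (fun o => exp (-t * V j o)) μ := by
      rintro (_|i)
      · have heq : (fun o => exp (-t * V none o)) = fun o => exp (-(t * wl) * g' o) := by
          funext o; show exp (-t * (wl * g' o)) = _; congr 1; ring
        show Integrable (fun o => exp (-t * V none o)) μ
        rw [heq]
        exact (aux_exp_id hg'id (-(t * wl))).integrable_iff.2 (hmgfγ (-(t * wl))).1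
      · exact (aux_exp_id (hZ'id i) (-t)).integrable_iff.2 (hintX ρ (l-1) t ht)
    have hsumfun : (fun ω => exp (-t * (∑ j, V j) ω)) =ᵐ[μ] (fun o => exp (-t * Y ρ l o)) := by
      have hall : ∀ᵐ o ∂μ, g o = g' o ∧ ∀ i, Z i o = Z' i o :=
        hgg'.and ((ae_all_iff).2 hZZ')
      filter_upwards [hall] with o ho
      have : (∑ j, V j) o = Y ρ l o := by
        rw [Finset.sum_apply, Fintype.sum_option, hYeq o]
        show wl * g' o + ∑ i, Z' i o = wl * g o + ∑ i, Z i o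
        rw [ho.1]
        congr 1
        exact (Finset.sum_congr rfl fun i _ => (ho.2 i).symm)
      rw [this]
    have hint : Integrable (fun o => exp (-t * Y ρ l o)) μ := by
      have hI := hindV.integrable_exp_mul_sum hVmeas (s := Finset.univ)
        (fun j _ => hintV j) (t := -t)
      exact hI.congr hsumfun
    refine ⟨hint, ?_⟩
    have hmain := hindV.mgf_sum hVmeas Finset.univ (t := -t)
    have hLHS : mgf (∑ j, V j) μ (-t) = ∫ o, exp (-t * Y ρ l o) ∂μ := by
      show ∫ ω, exp (-t * (∑ j, V j) ω) ∂μ = _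
      exact integral_congr_ae hsumfun
    have hnone : mgf (V none) μ (-t) = exp (-(t * wl) + σ ^ 2 * (t * wl) ^ 2 / 2) := by
      have heq : (fun o => exp (-t * V none o)) = fun o => exp (-(t * wl) * g' o) := by
        funext o; show exp (-t * (wl * g' o)) = _; congr 1; ring
      calc mgf (V none) μ (-t) = ∫ o, exp (-t * V none o) ∂μ := rfl
        _ = ∫ o, exp (-(t * wl) * g' o) ∂μ := by rw [heq]
        _ = ∫ o, exp (-(t * wl) * γ o) ∂μ := (aux_exp_id hg'id (-(t * wl))).integral_eq
        _ = exp (-(t * wl) + σ ^ 2 * (-(t * wl)) ^ 2 / 2) := (hmgfγ _).2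
        _ = exp (-(t * wl) + σ ^ 2 * (t * wl) ^ 2 / 2) := by rw [neg_sq]
    have hsome : ∀ i, mgf (V (some i)) μ (-t) = ∫ o, exp (-t * X ρ (l-1) o) ∂μ := fun i =>
      (aux_exp_id (hZ'id i) (-t)).integral_eq
    calc ∫ o, exp (-t * Y ρ l o) ∂μ = mgf (∑ j, V j) μ (-t) := hLHS.symm
      _ = ∏ j, mgf (V j) μ (-t) := hmain
      _ = mgf (V none) μ (-t) * ∏ i, mgf (V (some i)) μ (-t) := Fintype.prod_option _
      _ = exp (-(t * wl) + σ ^ 2 * (t * wl) ^ 2 / 2) *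
            (∫ o, exp (-t * X ρ (l - 1) o) ∂μ) ^ (dL - 1) := by
          rw [hnone, Finset.prod_congr rfl fun i _ => hsome i, Finset.prod_const,
            Finset.card_univ, Fintype.card_fin]
  -- the min step
  have hXstep : ∀ ρ : ℝ, 0 ≤ ρ → ∀ t : ℝ, 0 ≤ t → ∀ l : ℕ,
      Integrable (fun o => exp (-t * Y ρ l o)) μ →
      ∫ o, exp (-t * X ρ l o) ∂μ ≤ ((dR:ℝ) - 1) * ∫ o, exp (-t * Y ρ l o) ∂μ := by
    intro ρ hρ t ht l hYint
    obtain ⟨Z, hindZ, hZid, hXeq⟩ := (hrec ρ hρ (l+1)).hX l (Nat.lt_succ_self l)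
    haveI : Nonempty (Fin (dR - 1)) := ⟨⟨0, by omega⟩⟩
    have hZint : ∀ i, Integrable (fun o => exp (-t * Z i o)) μ := fun i =>
      (aux_exp_id (hZid i) (-t)).integrable_iff.2 hYint
    have hpt : ∀ o, exp (-t * X ρ l o) ≤ ∑ i, exp (-t * Z i o) := by
      intro o
      obtain ⟨i₀, hi₀⟩ := Set.mem_range.1
        ((Set.range_nonempty fun i => Z i o).csInf_mem (Set.finite_range _))
      rw [hXeq o, ← hi₀]
      exact Finset.single_le_sum (f := fun i => exp (-t * Z i o))
        (fun i _ => exp_nonneg _) (Finset.mem_univ i₀)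
    calc ∫ o, exp (-t * X ρ l o) ∂μ ≤ ∫ o, ∑ i, exp (-t * Z i o) ∂μ :=
          integral_mono (hintX ρ l t ht)
            (integrable_finset_sum _ fun i _ => hZint i) hpt
      _ = ∑ i, ∫ o, exp (-t * Z i o) ∂μ := integral_finset_sum _ fun i _ => hZint i
      _ = ∑ _i : Fin (dR-1), ∫ o, exp (-t * Y ρ l o) ∂μ :=
          Finset.sum_congr rfl fun i _ => (aux_exp_id (hZid i) (-t)).integral_eq
      _ = ((dR:ℝ) - 1) * ∫ o, exp (-t * Y ρ l o) ∂μ := by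
          rw [Finset.sum_const, Finset.card_univ, Fintype.card_fin, nsmul_eq_mul,
            Nat.cast_sub (by omega), Nat.cast_one]
  -- combined one-step bounds
  have hLstep0 : ∀ ρ : ℝ, 0 ≤ ρ → ∀ t : ℝ, 0 ≤ t →
      ∫ o, exp (-t * X ρ 0 o) ∂μ ≤
        ((dR:ℝ) - 1) * exp (-(t * ωbar 0) + σ ^ 2 * (t * ωbar 0) ^ 2 / 2) := by
    intro ρ hρ t ht
    have h0 := hY0law ρ hρ t
    have h1 := hXstep ρ hρ t ht 0 h0.1
    rwa [h0.2] at h1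
  have hLstep : ∀ ρ : ℝ, 0 ≤ ρ → ∀ t : ℝ, 0 ≤ t → ∀ l : ℕ, 0 < l →
      ∫ o, exp (-t * X ρ l o) ∂μ ≤
        ((dR:ℝ) - 1) * exp (-(t * (if l ≤ s then ωbar l else ρ)) +
            σ ^ 2 * (t * (if l ≤ s then ωbar l else ρ)) ^ 2 / 2) *
          (∫ o, exp (-t * X ρ (l - 1) o) ∂μ) ^ (dL - 1) := by
    intro ρ hρ t ht l hl
    obtain ⟨hYint, hYval⟩ := hYstep ρ hρ t ht l hl
    have h1 := hXstep ρ hρ t ht l hYint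
    rw [hYval, ← mul_assoc] at h1
    exact h1
  -- uniform bound at t = 1 below level s
  have hF : ∀ l : ℕ, l ≤ s → ∀ ρ : ℝ, 0 ≤ ρ →
      ∫ o, exp (-(1:ℝ) * X ρ l o) ∂μ ≤ auxF dR σ dL ωbar l := by
    intro l
    induction l with
    | zero => intro _ ρ hρ; exact hLstep0 ρ hρ 1 zero_le_one
    | succ n ih =>
      intro hls ρ hρ
      have hstep := hLstep ρ hρ 1 zero_le_one (n+1) (Nat.succ_pos n)
      rw [if_pos hls] at hstep
      refine hstep.trans ?_
      show _ ≤ ((dR:ℝ) - 1) *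
          exp (-((1:ℝ) * ωbar (n+1)) + σ ^ 2 * ((1:ℝ) * ωbar (n+1)) ^ 2 / 2) *
          (auxF dR σ dL ωbar n) ^ (dL - 1)
      have hmono := pow_le_pow_left₀ (Lnonneg ρ 1 n) (ih (by omega) ρ hρ) (dL - 1)
      have hfacpos : (0:ℝ) ≤ ((dR:ℝ) - 1) *
          exp (-((1:ℝ) * ωbar (n+1)) + σ ^ 2 * ((1:ℝ) * ωbar (n+1)) ^ 2 / 2) := by
        have : (0:ℝ) < (dR:ℝ) - 1 := by linarith
        positivity
      simpa using mul_le_mul_of_nonneg_left hmono hfacpos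
  -- choice of t and ρ
  obtain ⟨t₀, ht₀0, hbound⟩ := hXs
  set d2 : ℝ := (dL:ℝ) - 2 with hd2
  have hd2pos : (0:ℝ) < d2 := by rw [hd2]; linarith
  set B : ℝ := ((dR:ℝ) - 1) * exp (-1 / (2 * σ ^ 2)) with hB
  have hBpos : 0 < B := by
    rw [hB]; exact mul_pos (by linarith) (exp_pos _)
  set P : ℝ := B ^ (-(1:ℝ) / d2) with hPdef
  have hPpos : 0 < P := Real.rpow_pos_of_pos hBpos _
  have hchoice : ∃ t ρ : ℝ, 0 < t ∧ 0 ≤ ρ ∧ t * ρ = 1 / σ ^ 2 ∧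
      ∫ o, exp (-t * X ρ s o) ∂μ < P := by
    rcases ht₀0.lt_or_eq with htpos | ht00
    · refine ⟨t₀, 1 / (t₀ * σ ^ 2), htpos, by positivity, by field_simp [htpos.ne'], ?_⟩
      exact hbound _ (by positivity)
    · have hP1 : 1 < P := by
        have h1 := hbound 0 le_rfl
        rw [← ht00] at h1
        simpa using h1
      set M : ℝ := max (auxF dR σ dL ωbar s) 1 with hM
      have hM1 : (1:ℝ) ≤ M := le_max_right _ _
      have hMpos : (0:ℝ) < M := lt_of_lt_of_le one_pos hM1
      set t : ℝ := min 1 ((P - 1) / (2 * M)) with htdef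
      have htpos : 0 < t := lt_min one_pos (div_pos (by linarith) (by positivity))
      have ht1 : t ≤ 1 := min_le_left _ _
      refine ⟨t, 1 / (t * σ ^ 2), htpos, by positivity, by field_simp [htpos.ne'], ?_⟩
      set ρ : ℝ := 1 / (t * σ ^ 2) with hρdef
      have hρ : 0 ≤ ρ := by positivity
      have hpt : ∀ o, exp (-t * X ρ s o) ≤ (1 - t) + t * exp (-(1:ℝ) * X ρ s o) := by
        intro o
        have hcx := convexOn_exp.2 (Set.mem_univ (0:ℝ)) (Set.mem_univ (-(X ρ s o)))
          (show (0:ℝ) ≤ 1 - t by linarith) htpos.le (by ring)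
        simp only [smul_eq_mul, mul_zero, zero_add, exp_zero, mul_one] at hcx
        have h1 : t * -(X ρ s o) = -t * X ρ s o := by ring
        have h2 : -(X ρ s o) = -(1:ℝ) * X ρ s o := by ring
        rw [h1] at hcx
        rw [h2] at hcx
        exact hcx
      have hint1 : Integrable (fun o => exp (-(1:ℝ) * X ρ s o)) μ := hintX ρ s 1 zero_le_one
      have h1 : ∫ o, exp (-t * X ρ s o) ∂μ ≤
          (1 - t) + t * ∫ o, exp (-(1:ℝ) * X ρ s o) ∂μ := by
        have hmono := integral_mono (hintX ρ s t htpos.le)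
          ((integrable_const (1 - t)).add (hint1.const_mul t)) hpt
        have hadd : ∫ o, ((1 - t) + t * exp (-(1:ℝ) * X ρ s o)) ∂μ
            = (1 - t) + t * ∫ o, exp (-(1:ℝ) * X ρ s o) ∂μ := by
          rw [integral_add (integrable_const _) (hint1.const_mul t), integral_const,
            probReal_univ, smul_eq_mul, one_mul, integral_const_mul]
        exact le_of_le_of_eq hmono hadd
      have h2 : ∫ o, exp (-(1:ℝ) * X ρ s o) ∂μ ≤ M :=
        (hF s le_rfl ρ hρ).trans (le_max_left _ _)
      have htM : t * M ≤ (P - 1) / 2 := by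
        have := mul_le_mul_of_nonneg_right (min_le_right 1 ((P - 1) / (2 * M))) hMpos.le
        calc t * M ≤ (P - 1) / (2 * M) * M := this
          _ = (P - 1) / 2 := by field_simp [hMpos.ne']
      have : (1 - t) + t * ∫ o, exp (-(1:ℝ) * X ρ s o) ∂μ < P := by
        have hle : t * ∫ o, exp (-(1:ℝ) * X ρ s o) ∂μ ≤ t * M :=
          mul_le_mul_of_nonneg_left h2 htpos.le
        nlinarith
      linarith [h1]
  obtain ⟨t, ρ, htpos, hρ, htρ, hLs⟩ := hchoice
  -- the exponential factor at weight ρ equals exp (-1/(2σ²))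
  have hEρ : exp (-(t * ρ) + σ ^ 2 * (t * ρ) ^ 2 / 2) = exp (-1 / (2 * σ ^ 2)) := by
    rw [htρ]; congr 1; field_simp; ring
  set Ls : ℝ := ∫ o, exp (-t * X ρ s o) ∂μ with hLsdef
  set Q : ℝ := B ^ ((1:ℝ) / d2) with hQdef
  have hQpos : 0 < Q := Real.rpow_pos_of_pos hBpos _
  have hPQ : P * Q = 1 := by
    have he : -(1:ℝ)/d2 + 1/d2 = 0 := by ring
    rw [hPdef, hQdef, ← Real.rpow_add hBpos, he, Real.rpow_zero]
  have hBPp : B * P ^ (dL - 1) = P := by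
    have h1 : P ^ (dL - 1) = B ^ ((-(1:ℝ) / d2) * ((dL:ℝ) - 1)) := by
      rw [hPdef, ← Real.rpow_natCast (B ^ (-(1:ℝ) / d2)) (dL - 1), ← Real.rpow_mul hBpos.le]
      congr 2
      rw [Nat.cast_sub (by omega), Nat.cast_one]
    rw [h1]
    rw [show B * B ^ ((-(1:ℝ) / d2) * ((dL:ℝ) - 1)) =
        B ^ ((1:ℝ) + (-(1:ℝ) / d2) * ((dL:ℝ) - 1)) by
      rw [Real.rpow_add hBpos, Real.rpow_one]]
    rw [hPdef]
    congr 1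
    field_simp
    ring
  -- the main iteration
  have hiter : ∀ k : ℕ, ∫ o, exp (-t * X ρ (s + k) o) ∂μ ≤ (Ls * Q) ^ ((dL-1) ^ k) * P := by
    intro k
    induction k with
    | zero =>
      simp only [Nat.add_zero, pow_zero, pow_one]
      rw [mul_assoc, mul_comm Q P, hPQ, mul_one]
    | succ k ih =>
      have hstep := hLstep ρ hρ t htpos.le (s + k + 1) (by omega)
      rw [if_neg (by omega), hEρ, ← hB, Nat.add_sub_cancel] at hstep
      have hmono := pow_le_pow_left₀ (Lnonneg ρ t (s + k)) ih (dL - 1)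
      calc ∫ o, exp (-t * X ρ (s + (k+1)) o) ∂μ
          = ∫ o, exp (-t * X ρ (s + k + 1) o) ∂μ := by rw [← Nat.add_assoc]
        _ ≤ B * (∫ o, exp (-t * X ρ (s + k) o) ∂μ) ^ (dL - 1) := hstep
        _ ≤ B * ((Ls * Q) ^ ((dL-1) ^ k) * P) ^ (dL - 1) :=
            mul_le_mul_of_nonneg_left hmono hBpos.le
        _ = (Ls * Q) ^ ((dL-1) ^ (k+1)) * (B * P ^ (dL - 1)) := by
            rw [mul_pow, ← pow_mul, ← pow_succ]; ring
        _ = (Ls * Q) ^ ((dL-1) ^ (k+1)) * P := by rw [hBPp]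
  have hc1 : Ls * Q < 1 := by
    have := mul_lt_mul_of_pos_right hLs hQpos
    rwa [hPQ] at this
  refine ⟨Ls * Q, hc1, ρ, hρ, ?_⟩
  intro T hT S hSind hSid
  have hk : T - 1 = s + (T - s - 1) := by omega
  -- measurable modifications of S
  have hSae : ∀ i, AEMeasurable (S i) μ := fun i => (hSid i).aemeasurable_fst
  set S' : Fin dL → Ω → ℝ := fun i => (hSae i).mk (S i) with hS'def
  have hS'meas : ∀ i, Measurable (S' i) := fun i => (hSae i).measurable_mk
  have hSS' : ∀ i, S i =ᵐ[μ] S' i := fun i => (hSae i).ae_eq_mk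
  have hS'ind := aux_iIndepFun_congr hSind hSS'
  have hS'id : ∀ i, IdentDistrib (S' i) (X ρ (T-1)) μ μ := fun i =>
    ⟨(hS'meas i).aemeasurable, (hSid i).aemeasurable_snd,
      by rw [← Measure.map_congr (hSS' i), (hSid i).map_eq]⟩
  have hμeq : μ {o | ∑ i, S i o ≤ 0} = μ {o | (∑ i, S' i) o ≤ 0} := by
    refine measure_congr ?_
    filter_upwards [(ae_all_iff).2 hSS'] with o ho
    show (∑ i, S i o ≤ 0) = ((∑ i, S' i) o ≤ 0)
    rw [Finset.sum_apply, Finset.sum_congr rfl fun i _ => ho i]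
  have hintS : ∀ i, Integrable (fun o => exp (-t * S' i o)) μ := fun i =>
    (aux_exp_id (hS'id i) (-t)).integrable_iff.2 (hintX ρ (T-1) t htpos.le)
  have hintsum := hS'ind.integrable_exp_mul_sum hS'meas (s := Finset.univ)
    (fun i _ => hintS i) (t := -t)
  have hcher := measure_le_le_exp_mul_mgf (μ := μ) (X := ∑ i, S' i) 0
    (neg_nonpos_of_nonneg htpos.le) hintsum
  have hmgfprod := hS'ind.mgf_sum hS'meas Finset.univ (t := -t)
  have hfac : ∀ i : Fin dL, mgf (S' i) μ (-t) = ∫ o, exp (-t * X ρ (T-1) o) ∂μ := fun i =>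
    (aux_exp_id (hS'id i) (-t)).integral_eq
  have hLT : ∫ o, exp (-t * X ρ (T-1) o) ∂μ ≤ (Ls * Q) ^ ((dL-1) ^ (T - s - 1)) * P := by
    rw [hk]; exact hiter (T - s - 1)
  have hPdL : P ^ dL = B ^ (-(dL:ℝ) / d2) := by
    rw [hPdef, ← Real.rpow_natCast (B ^ (-(1:ℝ) / d2)) dL, ← Real.rpow_mul hBpos.le]
    congr 1
    ring
  calc (μ {o | ∑ i, S i o ≤ 0}).toReal
      = (μ {o | (∑ i, S' i) o ≤ 0}).toReal := by rw [hμeq]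
    _ ≤ exp (-(-t) * 0) * mgf (∑ i, S' i) μ (-t) := hcher
    _ = (∫ o, exp (-t * X ρ (T-1) o) ∂μ) ^ dL := by
        rw [mul_zero, exp_zero, one_mul, hmgfprod,
          Finset.prod_congr rfl fun i _ => hfac i, Finset.prod_const,
          Finset.card_univ, Fintype.card_fin]
    _ ≤ ((Ls * Q) ^ ((dL-1) ^ (T - s - 1)) * P) ^ dL :=
        pow_le_pow_left₀ (Lnonneg ρ t (T-1)) hLT dL
    _ = P ^ dL * (Ls * Q) ^ (dL * (dL-1) ^ (T - s - 1)) := by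
        rw [mul_pow, ← pow_mul, mul_comm ((dL-1) ^ (T - s - 1)) dL]; ring
    _ = B ^ (-(dL:ℝ) / d2) * (Ls * Q) ^ (dL * (dL-1) ^ (T - s - 1)) := by rw [hPdL]
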